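/- Let Φ ⊆ Δ(S×A) be a set of occupancy measures (probability vectors on a finite set), subopt(r,d) := max_{d'∈Φ}⟨r,d'⟩ − ⟨r,d⟩, and for a dataset D = {(d_k, ε_k)}_{k=1}^K with d_k ∈ Φ, ε_k ≥ 0 let R(D) := {r ∈ Δ(S×A) : subopt(r,d_k) ≤ ε_k ∀k}. Let Z := ⋃_k supp(d_k), let (d', ε') be a new pair with d' ∈ Φ, and suppose the new-mass fraction α := ∑_{(s,a)∉Z} d'(s,a) satisfies α > ε'·|Z|. Then R(D ∪ {(d',ε')}) is a strict subset of R(D). -/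

import Mathlib

open scoped BigOperators

noncomputable def dot {n : ℕ} (r d : Fin n → ℝ) : ℝ := ∑ i, r i * d i

noncomputable def subopt {n : ℕ} (Φ : Set (Fin n → ℝ)) (r d : Fin n → ℝ) : ℝ :=
  sSup ((fun dp => dot r dp) '' Φ) - dot r d

def simplex (n : ℕ) : Set (Fin n → ℝ) := {r | (∀ i, 0 ≤ r i) ∧ ∑ i, r i = 1}

def feasible {n K : ℕ} (Φ : Set (Fin n → ℝ)) (dk : Fin K → Fin n → ℝ)
    (εk : Fin K → ℝ) : Set (Fin n → ℝ) :=
  {r ∈ simplex n | ∀ k, subopt Φ r (dk k) ≤ εk k}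

noncomputable def suppUnion {n K : ℕ} (dk : Fin K → Fin n → ℝ) : Finset (Fin n) :=
  Finset.univ.filter (fun i => ∃ k, dk k i ≠ 0)

theorem stmt_6 {n K : ℕ} (hK : 0 < K) (Φ : Set (Fin n → ℝ)) (hΦ : Φ ⊆ simplex n)
    (dk : Fin K → Fin n → ℝ) (εk : Fin K → ℝ)
    (hmem : ∀ k, dk k ∈ Φ) (hε : ∀ k, 0 ≤ εk k)
    (d' : Fin n → ℝ) (ε' : ℝ) (hd' : d' ∈ Φ) (hε' : 0 ≤ ε')
    (hα : (∑ i ∈ Finset.univ \ suppUnion dk, d' i) > ε' * (suppUnion dk).card) :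
    feasible Φ (Fin.snoc dk d' : Fin (K + 1) → Fin n → ℝ) (Fin.snoc εk ε')
      ⊂ feasible Φ dk εk := by
  set Z : Finset (Fin n) := suppUnion dk with hZ
  have hzero : ∀ i ∉ Z, ∀ k, dk k i = 0 := by
    intro i hi k
    simp only [hZ, suppUnion, Finset.mem_filter, Finset.mem_univ, true_and, not_exists,
      not_not] at hi
    exact hi k
  set k0 : Fin K := ⟨0, hK⟩ with hk0
  -- Z is nonempty
  have hZne : Z.Nonempty := by
    by_contra h
    rw [Finset.not_nonempty_iff_eq_empty] at h
    have hs := (hΦ (hmem k0)).2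
    have : (∑ i, dk k0 i) = 0 := by
      apply Finset.sum_eq_zero
      intro i _
      exact hzero i (by simp [h]) k0
    rw [hs] at this; norm_num at this
  set c : ℝ := (Z.card : ℝ) with hc
  have hcpos : 0 < c := by
    simp only [hc, Nat.cast_pos, Finset.card_pos]; exact hZne
  set rZ : Fin n → ℝ := fun i => if i ∈ Z then 1 / c else 0 with hrZ
  have hdot : ∀ d : Fin n → ℝ, dot rZ d = (1 / c) * ∑ i ∈ Z, d i := by
    intro d
    simp only [dot, hrZ, ite_mul, zero_mul]
    rw [Finset.sum_ite_mem, Finset.univ_inter, Finset.mul_sum]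
  -- sum over Z of dk k equals 1
  have hsumdk : ∀ k, ∑ i ∈ Z, dk k i = 1 := by
    intro k
    rw [Finset.sum_subset (Finset.subset_univ Z) (fun i _ hi => hzero i hi k)]
    exact (hΦ (hmem k)).2
  -- bound: for any d ∈ Φ, dot rZ d ≤ 1/c
  have hbound : ∀ d ∈ Φ, dot rZ d ≤ 1 / c := by
    intro d hd
    rw [hdot]
    have h1 : ∑ i ∈ Z, d i ≤ 1 := by
      rw [← (hΦ hd).2]
      exact Finset.sum_le_sum_of_subset_of_nonneg (Finset.subset_univ Z)
        (fun i _ _ => (hΦ hd).1 i)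
    calc (1/c) * ∑ i ∈ Z, d i ≤ (1/c) * 1 := by
          apply mul_le_mul_of_nonneg_left h1 (by positivity)
      _ = 1/c := mul_one _
  have hbdd : BddAbove ((fun dp => dot rZ dp) '' Φ) := by
    refine ⟨1/c, ?_⟩
    rintro x ⟨d, hd, rfl⟩
    exact hbound d hd
  have hsSup_le : sSup ((fun dp => dot rZ dp) '' Φ) ≤ 1 / c := by
    refine csSup_le ⟨_, ⟨dk k0, hmem k0, rfl⟩⟩ ?_
    rintro x ⟨d, hd, rfl⟩; exact hbound d hd
  have hsSup_ge : (1 : ℝ) / c ≤ sSup ((fun dp => dot rZ dp) '' Φ) := by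
    have : dot rZ (dk k0) = 1 / c := by rw [hdot, hsumdk, mul_one]
    rw [← this]
    exact le_csSup hbdd ⟨dk k0, hmem k0, rfl⟩
  -- rZ ∈ feasible Φ dk εk
  have hrZfeas : rZ ∈ feasible Φ dk εk := by
    refine ⟨⟨fun i => ?_, ?_⟩, fun k => ?_⟩
    · simp only [hrZ]; positivity
    · simp only [hrZ]
      rw [Finset.sum_ite_mem, Finset.univ_inter, Finset.sum_const, nsmul_eq_mul]
      field_simp
      exact hc.symm
    · have : subopt Φ rZ (dk k) ≤ 0 := by
        simp only [subopt]
        have : dot rZ (dk k) = 1 / c := by rw [hdot, hsumdk, mul_one]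
        rw [this]; linarith [hsSup_le]
      linarith [hε k]
  -- rZ violates the new constraint
  have hrZnot : rZ ∉ feasible Φ (Fin.snoc dk d' : Fin (K + 1) → Fin n → ℝ)
      (Fin.snoc εk ε') := by
    intro hmem'
    have hlast := hmem'.2 (Fin.last K)
    simp only [Fin.snoc_last] at hlast
    -- subopt Φ rZ d' > ε'
    have hsplit : ∑ i ∈ Finset.univ \ Z, d' i + ∑ i ∈ Z, d' i = 1 := by
      rw [Finset.sum_sdiff (Finset.subset_univ Z)]
      exact (hΦ hd').2
    have hdotd' : dot rZ d' = (1/c) * (1 - ∑ i ∈ Finset.univ \ Z, d' i) := by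
      rw [hdot]; congr 1; linarith
    have : subopt Φ rZ d' ≥ (1/c) * (∑ i ∈ Finset.univ \ Z, d' i) := by
      simp only [subopt]
      rw [hdotd']
      have hr : (1:ℝ)/c * (1 - ∑ i ∈ Finset.univ \ Z, d' i)
          = 1/c - 1/c * ∑ i ∈ Finset.univ \ Z, d' i := by ring
      rw [hr]
      linarith [hsSup_ge]
    have hgt : (1/c) * (∑ i ∈ Finset.univ \ Z, d' i) > ε' := by
      rw [gt_iff_lt, show (1:ℝ)/c * ∑ i ∈ Finset.univ \ Z, d' i
          = (∑ i ∈ Finset.univ \ Z, d' i)/c by ring, lt_div_iff₀ hcpos]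
      linarith [hα]
    linarith
  constructor
  · -- subset
    rintro r ⟨hr1, hr2⟩
    refine ⟨hr1, fun k => ?_⟩
    have := hr2 k.castSucc
    simpa [Fin.snoc_castSucc] using this
  · intro h
    exact hrZnot (h hrZfeas)
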